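/- Let t > 0, let η be a probability measure on [0,∞) with η({0}) = 0, and let φ : (0,∞) → [0,∞) satisfy ∫_{[0,∞)} e^{−λs} dη(s) = e^{−tφ(λ)} for every λ > 0. Then for every A > 0 one has η((A,∞)) ≤ (t/(1−e^{−1})) · ∫_0^{1/A} (φ(λ)/λ) dλ, where the integral may be infinite. -/

import Mathlib

open MeasureTheory

/-- Convexity bound: `(1 - e⁻¹) * u ≤ 1 - e^{-u}` for `u ∈ [0,1]`. -/
lemma aux_convex_exp {u : ℝ} (hu0 : 0 ≤ u) (hu1 : u ≤ 1) :
    (1 - Real.exp (-1)) * u ≤ 1 - Real.exp (-u) := by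
  have h := convexOn_exp.2 (Set.mem_univ (0:ℝ)) (Set.mem_univ (-1:ℝ))
    (by linarith : (0:ℝ) ≤ 1 - u) hu0 (by ring)
  simp only [smul_eq_mul, mul_zero, mul_neg_one, zero_add, Real.exp_zero, mul_one] at h
  nlinarith [h]

/-- Tail estimate for a subordinator's one-dimensional law (Lemma 2.1 of the paper):
if `η` is a probability measure on `[0,∞)` with no atom at `0` whose Laplace transform
is `e^{-tφ(λ)}`, then `η((A,∞)) ≤ t/(1-e⁻¹) · ∫_0^{1/A} φ(λ)/λ dλ`. -/
theorem stmt_0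
    (t : ℝ) (ht : 0 < t)
    (η : Measure ℝ) [IsProbabilityMeasure η]
    (hsupp : η (Set.Iio 0) = 0) (h0 : η {0} = 0)
    (φ : ℝ → ℝ) (hφ : ∀ l : ℝ, 0 < l → 0 ≤ φ l)
    (hLaplace : ∀ l : ℝ, 0 < l →
      ∫ s in Set.Ici (0:ℝ), Real.exp (-l * s) ∂η = Real.exp (-(t * φ l)))
    (A : ℝ) (hA : 0 < A) :
    η (Set.Ioi A) ≤ ENNReal.ofReal (t / (1 - Real.exp (-1))) *
      ∫⁻ l in Set.Ioo (0:ℝ) A⁻¹, ENNReal.ofReal (φ l / l) := by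
  set c : ℝ := 1 - Real.exp (-1) with hc_def
  have hc : 0 < c := by
    have : Real.exp (-1) < 1 := Real.exp_lt_one_iff.mpr (by norm_num)
    simp only [hc_def]; linarith
  -- η(Ici 0) = 1
  have hIci : η (Set.Ici (0:ℝ)) = 1 := by
    have hu : η (Set.Iio (0:ℝ) ∪ Set.Ici 0) = η (Set.Iio 0) + η (Set.Ici 0) :=
      measure_union (Set.Iio_disjoint_Ici le_rfl) measurableSet_Ici
    rw [Set.Iio_union_Ici, measure_univ, hsupp, zero_add] at hu
    exact hu.symm
  set S : Set ℝ := Set.Ioo (0:ℝ) A⁻¹ with hS_def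
  set f : ℝ → ℝ → ENNReal :=
    fun s l => ENNReal.ofReal ((1 - Real.exp (-(l * s))) / l) with hf_def
  have hmeas : AEMeasurable (Function.uncurry f)
      ((η.restrict (Set.Ici 0)).prod (volume.restrict S)) := by
    apply Measurable.aemeasurable
    apply Measurable.ennreal_ofReal
    fun_prop
  -- Step 1: pointwise lower bound on the inner λ-integral, for s > A
  have step1 : ∀ s ∈ Set.Ioi A, ENNReal.ofReal c ≤ ∫⁻ l in S, f s l := by
    intro s hs
    have hsA : A < s := hs
    have hlow : ∀ l ∈ S, ENNReal.ofReal (c * A) ≤ f s l := by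
      intro l hl
      obtain ⟨hl0, hlA⟩ := hl
      have huA : l * A ≤ 1 := by
        rw [← mul_inv_cancel₀ (ne_of_gt hA)]
        have : l ≤ A⁻¹ := le_of_lt hlA
        nlinarith [inv_pos.mpr hA]
      have h1 : c * (l * A) ≤ 1 - Real.exp (-(l * A)) :=
        aux_convex_exp (by positivity) huA
      have h2 : Real.exp (-(l * s)) ≤ Real.exp (-(l * A)) := by
        apply Real.exp_le_exp.mpr; nlinarith
      have h3 : c * A ≤ (1 - Real.exp (-(l * s))) / l := by
        rw [le_div_iff₀ hl0]; nlinarith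
      exact ENNReal.ofReal_le_ofReal h3
    calc ENNReal.ofReal c = ENNReal.ofReal (c * A) * volume S := by
          rw [hS_def, Real.volume_Ioo, sub_zero, ← ENNReal.ofReal_mul (by positivity)]
          congr 1; field_simp
      _ = ∫⁻ _ in S, ENNReal.ofReal (c * A) := (setLIntegral_const _ _).symm
      _ ≤ ∫⁻ l in S, f s l := setLIntegral_mono' measurableSet_Ioo hlow
  -- Step 4: the inner s-integral, for l ∈ S
  have step4 : ∀ l ∈ S, (∫⁻ s in Set.Ici (0:ℝ), f s l ∂η) ≤
      ENNReal.ofReal t * ENNReal.ofReal (φ l / l) := by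
    intro l hl
    obtain ⟨hl0, _⟩ := hl
    have hmexp : Measurable fun s : ℝ => Real.exp (-(l * s)) := by fun_prop
    have hint_exp : Integrable (fun s : ℝ => Real.exp (-(l * s)))
        (η.restrict (Set.Ici 0)) := by
      apply Integrable.mono' (integrable_const 1) hmexp.aestronglyMeasurable
      filter_upwards [ae_restrict_mem measurableSet_Ici] with s hs
      rw [Real.norm_eq_abs, abs_of_pos (Real.exp_pos _)]
      apply Real.exp_le_one_iff.mpr
      simp only [neg_nonpos]
      exact mul_nonneg hl0.le hs
    have hint : Integrable (fun s : ℝ => 1 - Real.exp (-(l * s)))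
        (η.restrict (Set.Ici 0)) := (integrable_const 1).sub hint_exp
    have hval : ∫ s in Set.Ici (0:ℝ), (1 - Real.exp (-(l * s))) ∂η
        = 1 - Real.exp (-(t * φ l)) := by
      rw [integral_sub (integrable_const 1) hint_exp]
      have h1 : ∫ _ in Set.Ici (0:ℝ), (1:ℝ) ∂η = 1 := by
        simp [measureReal_def, hIci]
      have h2 : ∫ s in Set.Ici (0:ℝ), Real.exp (-(l * s)) ∂η
          = Real.exp (-(t * φ l)) := by
        simpa [neg_mul] using hLaplace l hl0
      rw [h1, h2]
    have hnn : 0 ≤ᵐ[η.restrict (Set.Ici 0)] fun s => 1 - Real.exp (-(l * s)) := by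
      filter_upwards [ae_restrict_mem measurableSet_Ici] with s hs
      have : Real.exp (-(l * s)) ≤ 1 := by
        apply Real.exp_le_one_iff.mpr
        simp only [neg_nonpos]
        exact mul_nonneg hl0.le hs
      simp only [Pi.zero_apply]
      linarith
    have hofReal : ∫⁻ s in Set.Ici (0:ℝ), ENNReal.ofReal (1 - Real.exp (-(l * s))) ∂η
        = ENNReal.ofReal (1 - Real.exp (-(t * φ l))) := by
      rw [← ofReal_integral_eq_lintegral_ofReal hint hnn, hval]
    have key : ∫⁻ s in Set.Ici (0:ℝ), f s l ∂η
        = ENNReal.ofReal l⁻¹ * ENNReal.ofReal (1 - Real.exp (-(t * φ l))) := by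
      rw [← hofReal, ← lintegral_const_mul _ (by fun_prop : Measurable fun s : ℝ =>
        ENNReal.ofReal (1 - Real.exp (-(l * s))))]
      congr 1; ext s
      simp only [hf_def]
      rw [← ENNReal.ofReal_mul (by positivity : (0:ℝ) ≤ l⁻¹), div_eq_mul_inv, mul_comm]
    rw [key]
    have hb : 1 - Real.exp (-(t * φ l)) ≤ t * φ l := by
      have := Real.add_one_le_exp (-(t * φ l)); linarith
    calc ENNReal.ofReal l⁻¹ * ENNReal.ofReal (1 - Real.exp (-(t * φ l)))
        ≤ ENNReal.ofReal l⁻¹ * ENNReal.ofReal (t * φ l) :=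
          mul_le_mul_right (ENNReal.ofReal_le_ofReal hb) _
      _ = ENNReal.ofReal t * ENNReal.ofReal (φ l / l) := by
          rw [← ENNReal.ofReal_mul (by positivity : (0:ℝ) ≤ l⁻¹),
            ← ENNReal.ofReal_mul ht.le]
          congr 1
          rw [div_eq_mul_inv]; ring
  -- Main chain
  have main : ENNReal.ofReal c * η (Set.Ioi A)
      ≤ ENNReal.ofReal t * ∫⁻ l in S, ENNReal.ofReal (φ l / l) := by
    calc ENNReal.ofReal c * η (Set.Ioi A)
        = ∫⁻ _ in Set.Ioi A, ENNReal.ofReal c ∂η := (setLIntegral_const _ _).symm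
      _ ≤ ∫⁻ s in Set.Ioi A, ∫⁻ l in S, f s l ∂volume ∂η :=
          setLIntegral_mono' measurableSet_Ioi step1
      _ ≤ ∫⁻ s in Set.Ici 0, ∫⁻ l in S, f s l ∂volume ∂η :=
          lintegral_mono_set (Set.Ioi_subset_Ici hA.le)
      _ = ∫⁻ l in S, ∫⁻ s in Set.Ici 0, f s l ∂η ∂volume :=
          lintegral_lintegral_swap hmeas
      _ ≤ ∫⁻ l in S, ENNReal.ofReal t * ENNReal.ofReal (φ l / l) ∂volume :=
          setLIntegral_mono' measurableSet_Ioo step4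
      _ = ENNReal.ofReal t * ∫⁻ l in S, ENNReal.ofReal (φ l / l) :=
          lintegral_const_mul' _ _ ENNReal.ofReal_ne_top
  have hcne : ENNReal.ofReal c ≠ 0 := ne_of_gt (ENNReal.ofReal_pos.mpr hc)
  calc η (Set.Ioi A)
      = (ENNReal.ofReal c)⁻¹ * (ENNReal.ofReal c * η (Set.Ioi A)) := by
        rw [← mul_assoc, ENNReal.inv_mul_cancel hcne ENNReal.ofReal_ne_top, one_mul]
    _ ≤ (ENNReal.ofReal c)⁻¹ * (ENNReal.ofReal t * ∫⁻ l in S, ENNReal.ofReal (φ l / l)) :=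
        mul_le_mul_right main _
    _ = ENNReal.ofReal (t / c) * ∫⁻ l in S, ENNReal.ofReal (φ l / l) := by
        rw [ENNReal.ofReal_div_of_pos hc, ENNReal.div_eq_inv_mul, mul_assoc]
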